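/- The assignment t(𝕀(s_0; s_1, ..., s_m; s_{m+1})) := Σ_T (T, (s_0, ..., s_{m+1})), the sum over all full binary trees T with m + 1 leaves decorated by the ordered sequence (s_0, s_1, ..., s_{m+1}), extends to a ℚ-algebra homomorphism t : 𝕀̃(S) → 𝒯(S) which is injective, preserves the grading, and intertwines the coproducts: Δ_𝒯 ∘ t = (t ⊗ t) ∘ Δ. Hence t is an injective homomorphism of commutative graded Hopf algebras. -/

import Mathlib

/-!
STATEMENT 8. The assignment `t(𝕀(s₀; s₁, …, s_m; s_{m+1})) := Σ_T (T, (s₀, …, s_{m+1}))`,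
the sum over all plane rooted trivalent trees with `m+1` leaves decorated by
`(s₀, …, s_{m+1})`, extends to an injective, grading-preserving ℚ-algebra homomorphism
`t : 𝕀̃(S) → 𝒯(S)` intertwining the coproducts: an injective homomorphism of commutative
graded Hopf algebras.
-/

open scoped TensorProduct

/-! The Hopf algebra `𝕀̃(S)`. -/

abbrev IGen (S : Type*) := S × {l : List S // l ≠ []} × S

abbrev Itilde (S : Type*) := MvPolynomial (IGen S) ℚ

noncomputable def ISym {S : Type*} (a : S) (l : List S) (b : S) : Itilde S :=
  match l with
  | [] => 1
  | x :: xs => MvPolynomial.X (a, ⟨x :: xs, by simp⟩, b)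

def wdeg {S : Type*} : IGen S → ℕ := fun g => g.2.1.1.length

def marks {α : Type*} : List α → List (List α × List (List α))
  | [] => [([], [[]])]
  | x :: l =>
      ((marks l).map fun p => (x :: p.1, [] :: p.2)) ++
      ((marks l).map fun p => (p.1, (x :: p.2.headI) :: p.2.tail))

def blockProd {S M : Type*} [CommMonoid M] (f : S → List S → S → M) :
    S → List (List S) → List S → S → M
  | _, [], _, _ => 1
  | a, [bl], [], b => f a bl b
  | a, bl :: bls, c :: cs, b => f a bl c * blockProd f c bls cs b
  | _, _ :: _ :: _, [], _ => 1

/-- The coproduct `Δ` of `𝕀̃(S)` (Goncharov's formula on generators). -/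
noncomputable def Delta {S : Type*} : Itilde S →ₐ[ℚ] Itilde S ⊗[ℚ] Itilde S :=
  MvPolynomial.aeval fun g : IGen S =>
    ((marks g.2.1.1).map fun p =>
      ISym g.1 p.1 g.2.2 ⊗ₜ[ℚ] blockProd ISym g.1 p.2 p.1 g.2.2).sum

/-! The Hopf algebra `𝒯(S)` of decorated plane rooted trivalent trees. -/

/-- Full binary trees whose leaves carry the labels of the arcs at their left. -/
inductive DT (S : Type*) : Type _
  | leaf (a : S) : DT S
  | node (l r : DT S) : DT S

def DT.leftLabel {S : Type*} : DT S → S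
  | .leaf a => a
  | .node l _ => l.leftLabel

def DT.internal {S : Type*} : DT S → ℕ
  | .leaf _ => 0
  | .node l r => l.internal + r.internal + 1

abbrev TGen (S : Type*) := {t : DT S × S // ∃ l r, t.1 = DT.node l r}

abbrev TAlg (S : Type*) := MvPolynomial (TGen S) ℚ

noncomputable def TSym {S : Type*} (t : DT S × S) : TAlg S :=
  match t with
  | (.leaf _, _) => 1
  | (.node l r, b) => MvPolynomial.X ⟨(.node l r, b), ⟨l, r, rfl⟩⟩

def wT {S : Type*} : TGen S → ℕ := fun g => g.1.1.internal

def dcuts {S : Type*} : DT S → S → List (DT S × List (DT S × S))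
  | .leaf a, _ => [(.leaf a, [])]
  | .node l r, rb =>
      (.leaf l.leftLabel, [(.node l r, rb)]) ::
      ((dcuts l r.leftLabel).flatMap fun pl =>
        (dcuts r rb).map fun pr => (DT.node pl.1 pr.1, pl.2 ++ pr.2))

/-- The coproduct `Δ_𝒯` of `𝒯(S)` (sum over antichains of internal vertices). -/
noncomputable def DeltaT {S : Type*} : TAlg S →ₐ[ℚ] TAlg S ⊗[ℚ] TAlg S :=
  MvPolynomial.aeval fun g : TGen S =>
    ((dcuts g.1.1 g.1.2).map fun q =>
      TSym (q.1, g.1.2) ⊗ₜ[ℚ] (q.2.map TSym).prod).sum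

/-- All plane binary trees with the given list of leaf labels. -/
def allTrees {S : Type*} : List S → List (DT S)
  | [] => []
  | [a] => [DT.leaf a]
  | a :: b :: l =>
      (List.range (l.length + 1)).attach.flatMap fun k =>
        (allTrees ((a :: b :: l).take (k.1 + 1))).flatMap fun L =>
          (allTrees ((a :: b :: l).drop (k.1 + 1))).map fun R => DT.node L R
  termination_by l => l.length
  decreasing_by
  · have := List.mem_range.mp k.2
    simp only [List.length_take, List.length_drop, List.length_cons]
    omega
  · have := List.mem_range.mp k.2
    simp only [List.length_take, List.length_drop, List.length_cons]
    omega

/-- The homomorphism `t : 𝕀̃(S) → 𝒯(S)`, sending `𝕀(s₀; s₁, …, s_m; s_{m+1})` to the sum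
of all plane rooted trivalent trees decorated by the ordered set `(s₀, …, s_{m+1})`. -/
noncomputable def treeMap {S : Type*} : Itilde S →ₐ[ℚ] TAlg S :=
  MvPolynomial.aeval fun g : IGen S =>
    ((allTrees (g.1 :: g.2.1.1)).map fun T => TSym (T, g.2.2)).sum
namespace HopfTreeProof

open MvPolynomial

attribute [local instance] Classical.propDecidable

variable {S : Type*}

/-! ### List helpers -/

theorem sum_map_flatMap {α β M : Type*} [AddCommMonoid M] (l : List α) (f : α → List β)
    (g : β → M) : ((l.flatMap f).map g).sum = (l.map fun a => ((f a).map g).sum).sum := by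
  induction l with
  | nil => rfl
  | cons x l ih => simp [List.flatMap_cons, ih]

theorem sum_map_add' {α M : Type*} [AddCommMonoid M] (l : List α) (f g : α → M) :
    (l.map fun a => f a + g a).sum = (l.map f).sum + (l.map g).sum := by
  induction l with
  | nil => simp
  | cons x l ih => simp [ih, add_add_add_comm]

theorem sum_map_pick {α M : Type*} [AddCommMonoid M] {l : List α} (hn : l.Nodup) {a : α}
    (ha : a ∈ l) (f : α → M) [DecidableEq α] :
    (l.map fun x => if x = a then f x else 0).sum = f a := by
  induction l with
  | nil => cases ha
  | cons y l ih =>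
    rcases List.nodup_cons.mp hn with ⟨hy, hl⟩
    rcases List.mem_cons.mp ha with rfl | ha'
    · simp only [List.map_cons, List.sum_cons, if_pos rfl]
      have h0 : (l.map fun x => if x = a then f x else 0).sum = 0 := by
        apply List.sum_eq_zero
        intro z hz
        rcases List.mem_map.mp hz with ⟨x, hx, rfl⟩
        exact if_neg (by rintro rfl; exact hy hx)
      rw [h0, add_zero]; simp
    · have hne : y ≠ a := fun h => hy (h ▸ ha')
      simp only [List.map_cons, List.sum_cons, if_neg hne, zero_add]
      exact ih hl ha'

theorem flatMap_attach {α β : Type*} (l : List α) (g : α → List β) :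
    (l.attach.flatMap fun x => g x.1) = l.flatMap g := by
  rw [← List.flatMap_map Subtype.val g, List.attach_map_subtype_val]

/-! ### Leaves of decorated trees -/

def leavesD : DT S → List S
  | .leaf a => [a]
  | .node l r => leavesD l ++ leavesD r

theorem leavesD_ne_nil (T : DT S) : leavesD T ≠ [] := by
  induction T with
  | leaf a => simp [leavesD]
  | node l r ihl ihr =>
    show leavesD l ++ leavesD r ≠ []
    intro h
    exact ihl (List.append_eq_nil_iff.mp h).1

theorem leavesD_eq_cons (T : DT S) : leavesD T = T.leftLabel :: (leavesD T).tail := by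
  induction T with
  | leaf a => rfl
  | node l r ihl ihr =>
    show leavesD l ++ leavesD r = DT.leftLabel l :: (leavesD l ++ leavesD r).tail
    rw [ihl]
    simp

/-! ### Splits of a list -/

def splits : List S → List (List S × S × List S)
  | [] => []
  | x :: l => ([], x, l) :: (splits l).map fun s => (x :: s.1, s.2.1, s.2.2)

theorem splits_append {l : List S} {s : List S × S × List S} (hs : s ∈ splits l) :
    s.1 ++ s.2.1 :: s.2.2 = l := by
  induction l generalizing s with
  | nil => cases hs
  | cons x l ih =>
    rcases List.mem_cons.mp hs with rfl | hs'
    · rfl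
    · rcases List.mem_map.mp hs' with ⟨t, ht, rfl⟩
      simp [ih ht]

theorem splits_pick {M : Type*} [AddCommMonoid M] [DecidableEq S] (v : List S) (hv : v ≠ [])
    (w : M) : ∀ (l u : List S),
    ((splits l).map fun s => if s.1 = u ∧ s.2.1 :: s.2.2 = v then w else 0).sum
      = if u ++ v = l then w else 0 := by
  intro l
  induction l with
  | nil =>
    intro u
    show (0 : M) = _
    rw [if_neg]
    intro h
    exact hv (List.append_eq_nil_iff.mp h).2
  | cons x l ih =>
    intro u
    show (if ([] : List S) = u ∧ x :: l = v then w else 0) +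
        (((splits l).map fun s => (x :: s.1, s.2.1, s.2.2)).map
          fun s => if s.1 = u ∧ s.2.1 :: s.2.2 = v then w else 0).sum = _
    rw [List.map_map]
    have hcomp : (fun s : List S × S × List S => if s.1 = u ∧ s.2.1 :: s.2.2 = v then w else 0) ∘
        (fun s : List S × S × List S => (x :: s.1, s.2.1, s.2.2))
        = fun s : List S × S × List S => if x :: s.1 = u ∧ s.2.1 :: s.2.2 = v then w else 0 := rfl
    rw [hcomp]
    cases u with
    | nil =>
      have h0 : ((splits l).map fun s : List S × S × List S =>
          if x :: s.1 = ([] : List S) ∧ s.2.1 :: s.2.2 = v then w else 0).sum = 0 := by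
        apply List.sum_eq_zero
        intro z hz
        rcases List.mem_map.mp hz with ⟨t, ht, rfl⟩
        simp
      rw [h0, add_zero]
      by_cases hxv : x :: l = v
      · rw [if_pos ⟨rfl, hxv⟩, if_pos (by simp [hxv])]
      · rw [if_neg (by rintro ⟨-, h⟩; exact hxv h), if_neg (by simpa using fun h => hxv h.symm)]
    | cons y u' =>
      have h1 : (if ([] : List S) = y :: u' ∧ x :: l = v then w else 0) = 0 := by
        rw [if_neg]; rintro ⟨h, -⟩; cases h
      rw [h1, zero_add]
      by_cases hxy : x = y
      · subst hxy
        have h2 : ((splits l).map fun s : List S × S × List S =>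
            if x :: s.1 = x :: u' ∧ s.2.1 :: s.2.2 = v then w else 0)
            = (splits l).map fun s => if s.1 = u' ∧ s.2.1 :: s.2.2 = v then w else 0 := by
          apply List.map_congr_left
          intro s hs
          simp [List.cons.injEq]
        rw [h2, ih u']
        by_cases h : u' ++ v = l
        · rw [if_pos h, if_pos (by simp [h])]
        · rw [if_neg h, if_neg (by simp [h])]
      · have h2 : ((splits l).map fun s : List S × S × List S =>
            if x :: s.1 = y :: u' ∧ s.2.1 :: s.2.2 = v then w else 0).sum = 0 := by
          apply List.sum_eq_zero
          intro z hz
          rcases List.mem_map.mp hz with ⟨t, ht, rfl⟩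
          rw [if_neg]
          rintro ⟨h, -⟩
          exact hxy (by injection h)
        rw [h2, if_neg (by rintro h; injection h; simp_all)]

end HopfTreeProof
namespace HopfTreeProof

variable {S : Type*}

/-! ### allTrees structure -/

theorem range_split {β : Type*} : ∀ (l : List S) (G : List S → List S → List β),
    ((List.range l.length).flatMap fun k => G (l.take k) (l.drop k))
      = (splits l).flatMap fun s => G s.1 (s.2.1 :: s.2.2) := by
  intro l
  induction l with
  | nil => intro G; rfl
  | cons x l ih =>
    intro G
    show ((List.range (l.length + 1)).flatMap fun k => G ((x :: l).take k) ((x :: l).drop k)) = _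
    rw [List.range_succ_eq_map, List.flatMap_cons, List.flatMap_map]
    have h2 : ((List.range l.length).flatMap
          fun k => G ((x :: l).take (Nat.succ k)) ((x :: l).drop (Nat.succ k)))
        = (splits l).flatMap fun s => G (x :: s.1) (s.2.1 :: s.2.2) :=
      ih fun u v => G (x :: u) v
    rw [h2]
    show _ = (splits (x :: l)).flatMap fun s => G s.1 (s.2.1 :: s.2.2)
    rw [show splits (x :: l) = ([], x, l) :: (splits l).map fun s => (x :: s.1, s.2.1, s.2.2)
      from rfl, List.flatMap_cons, List.flatMap_map]
    rfl

theorem allTrees_nil : allTrees ([] : List S) = [] := by simp [allTrees]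

theorem allTrees_single (a : S) : allTrees [a] = [DT.leaf a] := by simp [allTrees]

theorem allTrees_cons (a x : S) (l : List S) :
    allTrees (a :: x :: l) = (splits (x :: l)).flatMap fun s =>
      (allTrees (a :: s.1)).flatMap fun L =>
        (allTrees (s.2.1 :: s.2.2)).map fun R => DT.node L R := by
  rw [allTrees]
  rw [flatMap_attach (List.range (l.length + 1)) (fun k =>
      (allTrees (List.take (k + 1) (a :: x :: l))).flatMap fun L =>
        List.map (fun R => DT.node L R) (allTrees (List.drop (k + 1) (a :: x :: l))))]
  have h1 : ((List.range (l.length + 1)).flatMap fun k =>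
        (allTrees (List.take (k + 1) (a :: x :: l))).flatMap fun L =>
          List.map (fun R => DT.node L R) (allTrees (List.drop (k + 1) (a :: x :: l))))
      = (List.range (x :: l).length).flatMap fun k =>
        (allTrees (a :: (x :: l).take k)).flatMap fun L =>
          ((allTrees ((x :: l).drop k)).map fun R => DT.node L R) := rfl
  rw [h1, range_split (x :: l) fun u v =>
    (allTrees (a :: u)).flatMap fun L => (allTrees v).map fun R => DT.node L R]

theorem mem_allTrees_leaves : ∀ (T : DT S) (L : List S), T ∈ allTrees L → leavesD T = L := by
  intro T
  induction T with
  | leaf a =>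
    intro L hT
    match L with
    | [] => rw [allTrees_nil] at hT; cases hT
    | [c] =>
      rw [allTrees_single] at hT
      rcases List.mem_singleton.mp hT with h
      injection h with h'
      simp [leavesD, h']
    | c :: d :: L' =>
      rw [allTrees_cons] at hT
      rcases List.mem_flatMap.mp hT with ⟨s, hs, hT'⟩
      rcases List.mem_flatMap.mp hT' with ⟨L'', hL'', hT''⟩
      rcases List.mem_map.mp hT'' with ⟨R, hR, h⟩
      cases h
  | node ql qr ihl ihr =>
    intro L hT
    match L with
    | [] => rw [allTrees_nil] at hT; cases hT
    | [c] =>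
      rw [allTrees_single] at hT
      rcases List.mem_singleton.mp hT with h
      cases h
    | c :: d :: L' =>
      rw [allTrees_cons] at hT
      rcases List.mem_flatMap.mp hT with ⟨s, hs, hT'⟩
      rcases List.mem_flatMap.mp hT' with ⟨Tl, hTl, hT''⟩
      rcases List.mem_map.mp hT'' with ⟨Tr, hTr, h⟩
      injection h with h1 h2
      subst h1; subst h2
      have e1 := ihl _ hTl
      have e2 := ihr _ hTr
      show leavesD Tl ++ leavesD Tr = c :: d :: L'
      rw [e1, e2, List.cons_append, splits_append hs]

theorem mem_allTrees_leftLabel {T : DT S} {a : S} {l : List S} (h : T ∈ allTrees (a :: l)) :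
    T.leftLabel = a := by
  have h1 := mem_allTrees_leaves T _ h
  have h2 := leavesD_eq_cons T
  rw [h1] at h2
  injection h2 with h3
  exact h3.symm

/-- Indicator sum over `allTrees`: each tree with the right leaf sequence occurs exactly once. -/
theorem sum_allTrees_pick {M : Type*} [AddCommMonoid M] [DecidableEq (DT S)]
    [DecidableEq S] :
    ∀ (T : DT S) (L : List S) (v : M),
    ((allTrees L).map fun T' => if T' = T then v else 0).sum
      = if leavesD T = L then v else 0 := by
  intro T
  induction T with
  | leaf c =>
    intro L v
    match L with
    | [] =>
      rw [allTrees_nil]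
      show (0 : M) = _
      rw [if_neg (by simp [leavesD])]
    | [a] =>
      rw [allTrees_single]
      show (if DT.leaf a = DT.leaf c then v else 0) + 0 = _
      rw [add_zero]
      by_cases h : a = c
      · rw [if_pos (by rw [h]), if_pos (by simp [leavesD, h])]
      · rw [if_neg (by intro hh; injection hh with hh'; exact h hh'),
          if_neg (by simp [leavesD]; intro hh; exact (h hh.symm).elim)]
    | a :: x :: l =>
      rw [allTrees_cons]
      rw [sum_map_flatMap]
      have h0 : ((splits (x :: l)).map fun s =>
          (((allTrees (a :: s.1)).flatMap fun L => (allTrees (s.2.1 :: s.2.2)).map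
            fun R => DT.node L R).map fun T' => if T' = DT.leaf c then v else 0).sum).sum
          = 0 := by
        apply List.sum_eq_zero
        intro z hz
        rcases List.mem_map.mp hz with ⟨s, hs, rfl⟩
        apply List.sum_eq_zero
        intro z' hz'
        rcases List.mem_map.mp hz' with ⟨T', hT', rfl⟩
        rcases List.mem_flatMap.mp hT' with ⟨Tl, hTl, hT''⟩
        rcases List.mem_map.mp hT'' with ⟨Tr, hTr, rfl⟩
        exact if_neg (by intro h; cases h)
      rw [h0, if_neg (by simp [leavesD])]
  | node Ql Qr ihl ihr =>
    intro L v
    match L with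
    | [] =>
      rw [allTrees_nil]
      show (0 : M) = _
      rw [if_neg]
      intro h
      exact leavesD_ne_nil _ h
    | [a] =>
      rw [allTrees_single]
      show (if DT.leaf a = DT.node Ql Qr then v else 0) + 0 = _
      rw [add_zero, if_neg (by intro h; cases h), if_neg]
      show leavesD Ql ++ leavesD Qr ≠ [a]
      intro h
      have hlen := congrArg List.length h
      rw [List.length_append] at hlen
      have h1 := List.length_pos_iff.mpr (leavesD_ne_nil Ql)
      have h2 := List.length_pos_iff.mpr (leavesD_ne_nil Qr)
      simp at hlen
      omega
    | a :: x :: l =>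
      rw [allTrees_cons, sum_map_flatMap]
      have step1 : ∀ s ∈ splits (x :: l),
          ((((allTrees (a :: s.1)).flatMap fun Tl =>
              (allTrees (s.2.1 :: s.2.2)).map fun Tr => DT.node Tl Tr).map
                fun T' => if T' = DT.node Ql Qr then v else 0).sum)
          = if leavesD Ql = a :: s.1 ∧ leavesD Qr = s.2.1 :: s.2.2 then v else 0 := by
        intro s hs
        rw [sum_map_flatMap]
        have hin : ∀ Tl : DT S, (((allTrees (s.2.1 :: s.2.2)).map fun Tr => DT.node Tl Tr).map
              (fun T' => if T' = DT.node Ql Qr then v else 0)).sum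
            = if Tl = Ql then (if leavesD Qr = s.2.1 :: s.2.2 then v else 0) else 0 := by
          intro Tl
          rw [List.map_map]
          by_cases hTl : Tl = Ql
          · subst hTl
            rw [if_pos rfl, ← ihr (s.2.1 :: s.2.2) v]
            apply congrArg
            apply List.map_congr_left
            intro Tr hTr
            show (if DT.node Tl Tr = DT.node Tl Qr then v else 0) = if Tr = Qr then v else 0
            by_cases h : Tr = Qr
            · rw [if_pos (by rw [h]), if_pos h]
            · rw [if_neg (fun hh => h (by injection hh)), if_neg h]
          · rw [if_neg hTl]
            apply List.sum_eq_zero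
            intro z hz
            rcases List.mem_map.mp hz with ⟨Tr, hTr, rfl⟩
            exact if_neg (fun hh => hTl (by injection hh))
        rw [List.map_congr_left (fun Tl _ => hin Tl)]
        rw [ihl (a :: s.1) (if leavesD Qr = s.2.1 :: s.2.2 then v else 0)]
        by_cases h1 : leavesD Ql = a :: s.1 <;> by_cases h2 : leavesD Qr = s.2.1 :: s.2.2 <;>
          simp [h1, h2]
      rw [List.map_congr_left step1]
      by_cases hQa : Ql.leftLabel = a
      · have e : leavesD Ql = a :: (leavesD Ql).tail := by
          conv_lhs => rw [leavesD_eq_cons Ql]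
          rw [hQa]
        have hterm : ∀ s ∈ splits (x :: l),
            (if leavesD Ql = a :: s.1 ∧ leavesD Qr = s.2.1 :: s.2.2 then v else 0)
            = if s.1 = (leavesD Ql).tail ∧ s.2.1 :: s.2.2 = leavesD Qr then v else 0 := by
          intro s hs
          apply if_congr _ rfl rfl
          constructor
          · rintro ⟨h1, h2⟩
            refine ⟨?_, h2.symm⟩
            rw [e] at h1
            injection h1 with _ h1'
            exact h1'.symm
          · rintro ⟨h1, h2⟩
            refine ⟨by rw [e, h1], h2.symm⟩
        rw [List.map_congr_left hterm,
          splits_pick (leavesD Qr) (leavesD_ne_nil Qr) v (x :: l) (leavesD Ql).tail]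
        have hcond : ((leavesD Ql).tail ++ leavesD Qr = x :: l)
            ↔ (leavesD (DT.node Ql Qr) = a :: x :: l) := by
          show _ ↔ leavesD Ql ++ leavesD Qr = a :: x :: l
          constructor
          · intro h
            conv_lhs => rw [e]
            rw [List.cons_append, h]
          · intro h
            conv_lhs at h => rw [e]
            rw [List.cons_append] at h
            injection h with _ h'
        by_cases h : (leavesD Ql).tail ++ leavesD Qr = x :: l
        · rw [if_pos h, if_pos (hcond.mp h)]
        · rw [if_neg h, if_neg (fun hh => h (hcond.mpr hh))]
      · have h0 : ((splits (x :: l)).map fun s =>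
            if leavesD Ql = a :: s.1 ∧ leavesD Qr = s.2.1 :: s.2.2 then v else 0).sum = 0 := by
          apply List.sum_eq_zero
          intro z hz
          rcases List.mem_map.mp hz with ⟨s, hs, rfl⟩
          rw [if_neg]
          rintro ⟨h1, -⟩
          apply hQa
          rw [leavesD_eq_cons Ql] at h1
          injection h1 with h1' _
        rw [h0, if_neg]
        intro h
        apply hQa
        have h2 : leavesD Ql ++ leavesD Qr = a :: x :: l := h
        rw [leavesD_eq_cons Ql, List.cons_append] at h2
        injection h2 with h' _

end HopfTreeProof
namespace HopfTreeProof

open MvPolynomial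

variable {S : Type*}

/-- Sum of all decorated trees with leaf labels `a :: l` and right decoration `b`. -/
noncomputable def hT (a : S) (l : List S) (b : S) : TAlg S :=
  ((allTrees (a :: l)).map fun T => TSym (T, b)).sum

theorem hT_nil (a b : S) : hT a [] b = 1 := by
  simp [hT, allTrees_single, TSym]

theorem treeMap_X (g : IGen S) :
    treeMap (X g) = ((allTrees (g.1 :: g.2.1.1)).map fun T => TSym (T, g.2.2)).sum := by
  simp [treeMap]

theorem treeMap_ISym (a : S) (l : List S) (b : S) : treeMap (ISym a l b) = hT a l b := by
  cases l with
  | nil => rw [show ISym a [] b = 1 from rfl, map_one, hT_nil]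
  | cons x xs =>
    rw [show ISym a (x :: xs) b = X (a, ⟨x :: xs, by simp⟩, b) from rfl, treeMap_X]
    rfl

theorem treeMap_blockProd : ∀ (bls : List (List S)) (cs : List S) (a b : S),
    treeMap (blockProd ISym a bls cs b) = blockProd hT a bls cs b := by
  intro bls
  induction bls with
  | nil => intro cs a b; rw [show blockProd ISym a [] cs b = 1 from rfl, map_one]; rfl
  | cons bl bls ih =>
    intro cs a b
    cases bls with
    | nil =>
      cases cs with
      | nil =>
        rw [show blockProd ISym a [bl] [] b = ISym a bl b from rfl, treeMap_ISym]
        rfl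
      | cons c cs =>
        rw [show blockProd ISym a [bl] (c :: cs) b = ISym a bl c * blockProd ISym c [] cs b
          from rfl, map_mul, treeMap_ISym, show blockProd ISym c [] cs b = 1 from rfl, map_one]
        rfl
    | cons bl2 bls2 =>
      cases cs with
      | nil =>
        rw [show blockProd ISym a (bl :: bl2 :: bls2) [] b = 1 from rfl, map_one]
        rfl
      | cons c cs =>
        rw [show blockProd ISym a (bl :: bl2 :: bls2) (c :: cs) b
            = ISym a bl c * blockProd ISym c (bl2 :: bls2) cs b from rfl,
          map_mul, treeMap_ISym, ih]
        rfl

theorem blockProd_cons {M : Type*} [CommMonoid M] (f : S → List S → S → M) (a : S)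
    (bl : List S) (bls : List (List S)) (c : S) (cs : List S) (b : S) :
    blockProd f a (bl :: bls) (c :: cs) b = f a bl c * blockProd f c bls cs b := by
  cases bls <;> rfl

/-! ### marks and the `Wm` sums -/

theorem marks_snd_ne_nil {l : List S} : ∀ p ∈ marks l, p.2.headI :: p.2.tail = p.2 := by
  induction l with
  | nil =>
    intro p hp
    rcases List.mem_singleton.mp hp with rfl
    rfl
  | cons x l ih =>
    intro p hp
    rw [show marks (x :: l) = ((marks l).map fun p => (x :: p.1, [] :: p.2)) ++
      ((marks l).map fun p => (p.1, (x :: p.2.headI) :: p.2.tail)) from rfl] at hp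
    rcases List.mem_append.mp hp with hp' | hp' <;>
      · rcases List.mem_map.mp hp' with ⟨q, hq, rfl⟩
        rfl

/-- Marked sum: sums `blockProd` over all marks of `l` with chosen subsequence `w`, with
an extra prefix `pre` glued at the start of the first block. -/
noncomputable def Wm [DecidableEq S] (a : S) (pre l w : List S) (b : S) : TAlg S :=
  ((marks l).map fun p =>
    if p.1 = w then blockProd hT a ((pre ++ p.2.headI) :: p.2.tail) w b else 0).sum

theorem Wm_nil [DecidableEq S] (a : S) (pre w : List S) (b : S) :
    Wm a pre [] w b = if w = [] then hT a pre b else 0 := by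
  show (if ([] : List S) = w then blockProd hT a ((pre ++ ([[]] : List (List S)).headI)
      :: ([[]] : List (List S)).tail) w b else 0) + 0 = _
  rw [add_zero]
  by_cases h : w = []
  · subst h
    rw [if_pos rfl, if_pos rfl]
    show blockProd hT a [pre ++ []] [] b = hT a pre b
    rw [List.append_nil]
    rfl
  · rw [if_neg (fun hh => h hh.symm), if_neg h]

theorem Wm_cons_nil [DecidableEq S] (a : S) (pre : List S) (x : S) (l : List S) (b : S) :
    Wm a pre (x :: l) [] b = Wm a (pre ++ [x]) l [] b := by
  show ((((marks l).map fun p => (x :: p.1, ([] : List S) :: p.2)) ++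
      ((marks l).map fun p => (p.1, (x :: p.2.headI) :: p.2.tail))).map fun p =>
        if p.1 = [] then blockProd hT a ((pre ++ p.2.headI) :: p.2.tail) [] b else 0).sum = _
  rw [List.map_append, List.sum_append, List.map_map, List.map_map]
  have h1 : (List.map ((fun p : List S × List (List S) =>
      if p.1 = ([] : List S) then blockProd hT a ((pre ++ p.2.headI) :: p.2.tail) ([] : List S) b
        else 0) ∘ fun p => (x :: p.1, ([] : List S) :: p.2)) (marks l)).sum = 0 := by
    apply List.sum_eq_zero
    intro z hz
    rcases List.mem_map.mp hz with ⟨p, hp, rfl⟩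
    simp [Function.comp]
  rw [h1, zero_add, Wm]
  apply congrArg
  apply List.map_congr_left
  intro p hp
  show (if p.1 = ([] : List S) then
      blockProd hT a ((pre ++ (x :: p.2.headI)) :: p.2.tail) ([] : List S) b else 0) = _
  apply if_congr Iff.rfl _ rfl
  rw [List.append_cons]

theorem Wm_cons_cons [DecidableEq S] (a : S) (pre : List S) (x : S) (l : List S) (c : S)
    (w : List S) (b : S) :
    Wm a pre (x :: l) (c :: w) b
      = (if x = c then hT a pre x * Wm x [] l w b else 0) + Wm a (pre ++ [x]) l (c :: w) b := by
  show ((((marks l).map fun p => (x :: p.1, ([] : List S) :: p.2)) ++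
      ((marks l).map fun p => (p.1, (x :: p.2.headI) :: p.2.tail))).map fun p =>
        if p.1 = c :: w then blockProd hT a ((pre ++ p.2.headI) :: p.2.tail) (c :: w) b
          else 0).sum = _
  rw [List.map_append, List.sum_append, List.map_map, List.map_map]
  congr 1
  · -- first part
    by_cases hxc : x = c
    · subst hxc
      rw [if_pos rfl]
      rw [Wm, ← List.sum_map_mul_left]
      apply congrArg
      apply List.map_congr_left
      intro p hp
      show (if x :: p.1 = x :: w then blockProd hT a ((pre ++ ([] : List S))
          :: (([] : List S) :: p.2).tail) (x :: w) b else 0)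
        = hT a pre x * if p.1 = w then blockProd hT x (([] ++ p.2.headI) :: p.2.tail) w b else 0
      by_cases hpw : p.1 = w
      · rw [if_pos (by rw [hpw]), if_pos hpw]
        show blockProd hT a ((pre ++ ([] : List S)) :: p.2) (x :: w) b
            = hT a pre x * blockProd hT x (([] ++ p.2.headI) :: p.2.tail) w b
        rw [List.append_nil, List.nil_append, blockProd_cons, marks_snd_ne_nil p hp]
      · rw [if_neg (by simp [hpw]), if_neg hpw, mul_zero]
    · rw [if_neg hxc]
      apply List.sum_eq_zero
      intro z hz
      rcases List.mem_map.mp hz with ⟨p, hp, rfl⟩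
      simp [Function.comp, hxc]
  · -- second part
    rw [Wm]
    apply congrArg
    apply List.map_congr_left
    intro p hp
    show (if p.1 = c :: w then blockProd hT a ((pre ++ (x :: p.2.headI)) :: p.2.tail) (c :: w) b
        else 0) = _
    apply if_congr Iff.rfl _ rfl
    rw [List.append_cons]

theorem Wm_nilw [DecidableEq S] : ∀ (l : List S) (a : S) (pre : List S) (b : S),
    Wm a pre l [] b = hT a (pre ++ l) b := by
  intro l
  induction l with
  | nil => intro a pre b; rw [Wm_nil, if_pos rfl, List.append_nil]
  | cons x l ih =>
    intro a pre b
    rw [Wm_cons_nil, ih]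
    congr 1
    simp

/-- The key splitting identity for marked sums. -/
theorem Wm_split [DecidableEq S] (c : S) (v : List S) (b : S) : ∀ (l : List S) (a : S)
    (pre u : List S),
    ((splits l).map fun s =>
      if s.2.1 = c then Wm a pre s.1 u c * Wm c [] s.2.2 v b else 0).sum
    = Wm a pre l (u ++ c :: v) b := by
  intro l
  induction l with
  | nil =>
    intro a pre u
    show (0 : TAlg S) = _
    rw [Wm_nil, if_neg (by simp)]
  | cons x l ih =>
    intro a pre u
    show (if x = c then Wm a pre [] u c * Wm c [] l v b else 0) +
      (((splits l).map fun s => (x :: s.1, s.2.1, s.2.2)).map fun s =>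
        if s.2.1 = c then Wm a pre s.1 u c * Wm c [] s.2.2 v b else 0).sum = _
    rw [List.map_map]
    have hcomp : ((fun s : List S × S × List S =>
        if s.2.1 = c then Wm a pre s.1 u c * Wm c [] s.2.2 v b else 0) ∘
        fun s => (x :: s.1, s.2.1, s.2.2))
        = fun s : List S × S × List S =>
          if s.2.1 = c then Wm a pre (x :: s.1) u c * Wm c [] s.2.2 v b else 0 := rfl
    rw [hcomp]
    cases u with
    | nil =>
      rw [List.nil_append]
      rw [Wm_cons_cons a pre x l c v b]
      congr 1
      · rw [Wm_nil, if_pos rfl]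
        by_cases hxc : x = c
        · subst hxc; rfl
        · rw [if_neg hxc, if_neg hxc]
      · have : (fun s : List S × S × List S =>
            if s.2.1 = c then Wm a pre (x :: s.1) ([] : List S) c * Wm c [] s.2.2 v b else 0)
            = fun s : List S × S × List S =>
              if s.2.1 = c then Wm a (pre ++ [x]) s.1 ([] : List S) c * Wm c [] s.2.2 v b
                else 0 := by
          funext s
          apply if_congr Iff.rfl _ rfl
          rw [Wm_cons_nil]
        rw [this, ih a (pre ++ [x]) [], List.nil_append]
    | cons d u' =>
      have h1 : (if x = c then Wm a pre [] (d :: u') c * Wm c [] l v b else 0) = 0 := by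
        rw [Wm_nil, if_neg (List.cons_ne_nil d u')]
        simp
      rw [h1, zero_add]
      have hexp : (fun s : List S × S × List S =>
          if s.2.1 = c then Wm a pre (x :: s.1) (d :: u') c * Wm c [] s.2.2 v b else 0)
          = fun s : List S × S × List S =>
            ((if s.2.1 = c then (if x = d then hT a pre x * Wm x [] s.1 u' c else 0)
                * Wm c [] s.2.2 v b else 0)
              + (if s.2.1 = c then Wm a (pre ++ [x]) s.1 (d :: u') c * Wm c [] s.2.2 v b
                  else 0)) := by
        funext s
        by_cases hs : s.2.1 = c
        · rw [if_pos hs, if_pos hs, if_pos hs, Wm_cons_cons, add_mul]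
        · rw [if_neg hs, if_neg hs, if_neg hs, add_zero]
      rw [hexp, sum_map_add', ih a (pre ++ [x]) (d :: u')]
      show _ + Wm a (pre ++ [x]) l (d :: (u' ++ c :: v)) b
          = Wm a pre (x :: l) (d :: (u' ++ c :: v)) b
      rw [Wm_cons_cons a pre x l d (u' ++ c :: v) b]
      congr 1
      by_cases hxd : x = d
      · rw [if_pos hxd]
        have : (fun s : List S × S × List S =>
            if s.2.1 = c then (if x = d then hT a pre x * Wm x [] s.1 u' c else 0)
              * Wm c [] s.2.2 v b else 0)
            = fun s : List S × S × List S =>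
              hT a pre x * (if s.2.1 = c then Wm x [] s.1 u' c * Wm c [] s.2.2 v b else 0) := by
          funext s
          by_cases hs : s.2.1 = c
          · rw [if_pos hs, if_pos hxd, if_pos hs, mul_assoc]
          · rw [if_neg hs, if_neg hs, mul_zero]
        rw [this, List.sum_map_mul_left, ih x [] u']
      · rw [if_neg hxd]
        apply List.sum_eq_zero
        intro z hz
        rcases List.mem_map.mp hz with ⟨s, hs, rfl⟩
        by_cases h : s.2.1 = c
        · rw [if_pos h, if_neg hxd, zero_mul]
        · rw [if_neg h]

end HopfTreeProof
namespace HopfTreeProof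

open MvPolynomial

variable {S : Type*}

theorem mem_allTrees_node {a x : S} {l : List S} {T : DT S} (h : T ∈ allTrees (a :: x :: l)) :
    ∃ L R, T = DT.node L R := by
  rw [allTrees_cons] at h
  rcases List.mem_flatMap.mp h with ⟨s, hs, h'⟩
  rcases List.mem_flatMap.mp h' with ⟨Tl, hTl, h''⟩
  rcases List.mem_map.mp h'' with ⟨Tr, hTr, rfl⟩
  exact ⟨Tl, Tr, rfl⟩

theorem dcuts_node (Tl Tr : DT S) (b : S) :
    dcuts (DT.node Tl Tr) b = (DT.leaf Tl.leftLabel, [(DT.node Tl Tr, b)]) ::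
      ((dcuts Tl Tr.leftLabel).flatMap fun pl =>
        (dcuts Tr b).map fun pr => (DT.node pl.1 pr.1, pl.2 ++ pr.2)) := rfl

/-- Generating function of cuts of all trees over `L`, by quotient tree `Q`. -/
noncomputable def cutv [DecidableEq (DT S)] (L : List S) (b : S) (Q : DT S) : TAlg S :=
  ((allTrees L).map fun T =>
    ((dcuts T b).map fun q => if q.1 = Q then (q.2.map TSym).prod else 0).sum).sum

theorem cutv_leaf [DecidableEq S] [DecidableEq (DT S)] (a c : S) (l : List S) (b : S) :
    cutv (a :: l) b (DT.leaf c) = if c = a then hT a l b else 0 := by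
  cases l with
  | nil =>
    simp only [cutv]
    rw [allTrees_single, hT_nil]
    have hd : dcuts (DT.leaf a) b = [(DT.leaf a, [])] := rfl
    simp only [List.map_cons, List.map_nil, List.sum_cons, List.sum_nil, add_zero, hd]
    by_cases h : a = c
    · rw [if_pos (by rw [h]), if_pos h.symm]
      rfl
    · rw [if_neg (fun hh => h (by injection hh)), if_neg (fun hh => h hh.symm)]
  | cons x l' =>
    have key : ∀ T ∈ allTrees (a :: x :: l'),
        ((dcuts T b).map fun q => if q.1 = DT.leaf c then (q.2.map TSym).prod else 0).sum
        = if c = a then TSym (T, b) else 0 := by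
      intro T hT'
      rcases mem_allTrees_node hT' with ⟨Tl, Tr, rfl⟩
      have hll : Tl.leftLabel = a := mem_allTrees_leftLabel (T := DT.node Tl Tr) hT'
      rw [dcuts_node, List.map_cons, List.sum_cons]
      have h0 : (((dcuts Tl Tr.leftLabel).flatMap fun pl =>
          (dcuts Tr b).map fun pr => (DT.node pl.1 pr.1, pl.2 ++ pr.2)).map
            fun q => if q.1 = DT.leaf c then (q.2.map TSym).prod else 0).sum = 0 := by
        apply List.sum_eq_zero
        intro z hz
        rcases List.mem_map.mp hz with ⟨q, hq, rfl⟩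
        rcases List.mem_flatMap.mp hq with ⟨pl, hpl, hq'⟩
        rcases List.mem_map.mp hq' with ⟨pr, hpr, rfl⟩
        exact if_neg (by intro h; cases h)
      rw [h0, add_zero]
      by_cases h : c = a
      · rw [if_pos (by rw [hll, ← h]), if_pos h]
        show TSym (DT.node Tl Tr, b) * 1 = _
        rw [mul_one]
      · rw [if_neg (by intro hh; injection hh with hh'; exact h (hh'.symm.trans hll)), if_neg h]
    simp only [cutv]
    rw [List.map_congr_left key]
    by_cases h : c = a
    · simp only [if_pos h]
      rfl
    · simp only [if_neg h]
      apply List.sum_eq_zero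
      intro z hz
      rcases List.mem_map.mp hz with ⟨T, hT', rfl⟩
      rfl

end HopfTreeProof
namespace HopfTreeProof

open MvPolynomial

variable {S : Type*}

theorem cutv_node [DecidableEq S] [DecidableEq (DT S)] (a : S) (l : List S) (b : S)
    (Ql Qr : DT S) :
    cutv (a :: l) b (DT.node Ql Qr)
      = ((splits l).map fun s => cutv (a :: s.1) s.2.1 Ql * cutv (s.2.1 :: s.2.2) b Qr).sum := by
  cases l with
  | nil =>
    simp only [cutv]
    rw [allTrees_single]
    have hd : dcuts (DT.leaf a) b = [(DT.leaf a, [])] := rfl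
    simp only [List.map_cons, List.map_nil, List.sum_cons, List.sum_nil, add_zero, hd]
    rw [if_neg (by intro h; cases h)]
    rfl
  | cons x l' =>
    simp only [cutv]
    rw [allTrees_cons, sum_map_flatMap]
    refine congrArg List.sum (List.map_congr_left ?_)
    intro s hs
    rw [sum_map_flatMap]
    have inner : ∀ Tl : DT S, ∀ Tr ∈ allTrees (s.2.1 :: s.2.2),
        ((dcuts (DT.node Tl Tr) b).map
          fun q => if q.1 = DT.node Ql Qr then (q.2.map TSym).prod else 0).sum
        = ((dcuts Tl s.2.1).map fun pl => if pl.1 = Ql then (pl.2.map TSym).prod else 0).sum *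
          ((dcuts Tr b).map fun pr => if pr.1 = Qr then (pr.2.map TSym).prod else 0).sum := by
      intro Tl Tr hTr
      have hlr : Tr.leftLabel = s.2.1 := mem_allTrees_leftLabel hTr
      rw [dcuts_node, List.map_cons, List.sum_cons, if_neg (by intro h; cases h), zero_add]
      rw [sum_map_flatMap, hlr, ← List.sum_map_mul_right]
      refine congrArg List.sum (List.map_congr_left ?_)
      intro pl hpl
      rw [List.map_map, ← List.sum_map_mul_left]
      refine congrArg List.sum (List.map_congr_left ?_)
      intro pr hpr
      show (if DT.node pl.1 pr.1 = DT.node Ql Qr then ((pl.2 ++ pr.2).map TSym).prod else 0)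
          = (if pl.1 = Ql then (pl.2.map TSym).prod else 0) *
            (if pr.1 = Qr then (pr.2.map TSym).prod else 0)
      by_cases h1 : pl.1 = Ql <;> by_cases h2 : pr.1 = Qr
      · rw [if_pos (by rw [h1, h2]), if_pos h1, if_pos h2, List.map_append, List.prod_append]
      · rw [if_neg (by intro h; injection h with e1 e2; exact h2 e2), if_pos h1, if_neg h2,
          mul_zero]
      · rw [if_neg (by intro h; injection h with e1 e2; exact h1 e1), if_neg h1, zero_mul]
      · rw [if_neg (by intro h; injection h with e1 e2; exact h1 e1), if_neg h1, zero_mul]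
    have outer : ∀ Tl : DT S,
        (((allTrees (s.2.1 :: s.2.2)).map fun Tr => DT.node Tl Tr).map fun T =>
          ((dcuts T b).map fun q => if q.1 = DT.node Ql Qr then (q.2.map TSym).prod else 0).sum).sum
        = ((dcuts Tl s.2.1).map fun pl => if pl.1 = Ql then (pl.2.map TSym).prod else 0).sum *
            cutv (s.2.1 :: s.2.2) b Qr := by
      intro Tl
      rw [List.map_map]
      have : ((allTrees (s.2.1 :: s.2.2)).map
            ((fun T => ((dcuts T b).map
              fun q => if q.1 = DT.node Ql Qr then (q.2.map TSym).prod else 0).sum) ∘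
              fun Tr => DT.node Tl Tr))
          = (allTrees (s.2.1 :: s.2.2)).map fun Tr =>
              ((dcuts Tl s.2.1).map fun pl => if pl.1 = Ql then (pl.2.map TSym).prod else 0).sum *
              ((dcuts Tr b).map fun pr => if pr.1 = Qr then (pr.2.map TSym).prod else 0).sum :=
        List.map_congr_left fun Tr hTr => inner Tl Tr hTr
      rw [this, List.sum_map_mul_left]
      rfl
    rw [List.map_congr_left fun Tl _ => outer Tl, List.sum_map_mul_right]
    rfl

/-- The main pointwise identity: cut sums equal marked sums. -/
theorem cutv_eq_Wm [DecidableEq S] [DecidableEq (DT S)] :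
    ∀ (Q : DT S) (l : List S) (a b : S),
    cutv (a :: l) b Q = if Q.leftLabel = a then Wm a [] l (leavesD Q).tail b else 0 := by
  intro Q
  induction Q with
  | leaf c =>
    intro l a b
    rw [cutv_leaf]
    show _ = if c = a then Wm a [] l ([c] : List S).tail b else 0
    rw [show ([c] : List S).tail = [] from rfl, Wm_nilw, List.nil_append]
  | node Ql Qr ihl ihr =>
    intro l a b
    rw [cutv_node]
    have hQr := leavesD_eq_cons Qr
    have hterm : ∀ s ∈ splits l,
        cutv (a :: s.1) s.2.1 Ql * cutv (s.2.1 :: s.2.2) b Qr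
        = if Ql.leftLabel = a then
            (if s.2.1 = Qr.leftLabel then
              Wm a [] s.1 (leavesD Ql).tail Qr.leftLabel *
                Wm Qr.leftLabel [] s.2.2 (leavesD Qr).tail b else 0) else 0 := by
      intro s hs
      rw [ihl, ihr]
      by_cases hA : Ql.leftLabel = a
      · rw [if_pos hA, if_pos hA]
        by_cases hB : s.2.1 = Qr.leftLabel
        · rw [if_pos hB.symm, if_pos hB, hB]
        · rw [if_neg (fun h => hB h.symm), if_neg hB, mul_zero]
      · rw [if_neg hA, if_neg hA, zero_mul]
    rw [List.map_congr_left hterm]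
    by_cases hA : Ql.leftLabel = a
    · simp only [if_pos hA]
      rw [Wm_split Qr.leftLabel (leavesD Qr).tail b l a [] (leavesD Ql).tail]
      have hlv : leavesD (DT.node Ql Qr) = Ql.leftLabel :: ((leavesD Ql).tail ++
          (Qr.leftLabel :: (leavesD Qr).tail)) := by
        show leavesD Ql ++ leavesD Qr = _
        rw [← hQr]
        conv_lhs => rw [leavesD_eq_cons Ql]
        rw [List.cons_append]
      rw [show (DT.node Ql Qr).leftLabel = Ql.leftLabel from rfl, if_pos hA, hlv]
      rfl
    · simp only [if_neg hA]
      rw [show (DT.node Ql Qr).leftLabel = Ql.leftLabel from rfl, if_neg hA]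
      apply List.sum_eq_zero
      intro z hz
      rcases List.mem_map.mp hz with ⟨s, hs, rfl⟩
      rfl

end HopfTreeProof
namespace HopfTreeProof

open MvPolynomial

variable {S : Type*}

theorem grouping {α N M : Type*} [AddCommMonoid N] [AddCommMonoid M] [DecidableEq α]
    (F : α → N →+ M) : ∀ (L : List (α × N)) (K : List α), K.Nodup → (∀ p ∈ L, p.1 ∈ K) →
    (L.map fun p => F p.1 p.2).sum
      = (K.map fun Q => F Q ((L.map fun p => if p.1 = Q then p.2 else 0).sum)).sum := by
  intro L
  induction L with
  | nil =>
    intro K hK hL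
    show (0 : M) = _
    symm
    apply List.sum_eq_zero
    intro z hz
    rcases List.mem_map.mp hz with ⟨Q, hQ, rfl⟩
    simp
  | cons p L ih =>
    intro K hK hL
    rw [List.map_cons, List.sum_cons, ih K hK (fun q hq => hL q (List.mem_cons_of_mem p hq))]
    have key : ∀ Q ∈ K, F Q (((p :: L).map fun p' => if p'.1 = Q then p'.2 else 0).sum)
        = (if Q = p.1 then F Q p.2 else 0)
          + F Q ((L.map fun p' => if p'.1 = Q then p'.2 else 0).sum) := by
      intro Q hQ
      rw [List.map_cons, List.sum_cons, map_add]
      congr 1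
      by_cases h : p.1 = Q
      · rw [if_pos h, if_pos h.symm]
      · rw [if_neg h, if_neg (fun hh => h hh.symm), map_zero]
    rw [List.map_congr_left key, sum_map_add',
      sum_map_pick hK (hL p List.mem_cons_self) (fun Q => F Q p.2)]

theorem list_sum_tmul {α : Type*} (l : List α) (f : α → TAlg S) (y : TAlg S) :
    (((l.map f).sum) ⊗ₜ[ℚ] y : TAlg S ⊗[ℚ] TAlg S) = (l.map fun x => f x ⊗ₜ[ℚ] y).sum := by
  induction l with
  | nil => simp [TensorProduct.zero_tmul]
  | cons x l ih => simp [List.map_cons, TensorProduct.add_tmul, ih]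

theorem deltaT_TSym (T : DT S) (b : S) :
    DeltaT (TSym (T, b)) = ((dcuts T b).map fun q =>
      TSym (q.1, b) ⊗ₜ[ℚ] ((q.2.map TSym).prod : TAlg S)).sum := by
  cases T with
  | leaf a =>
    show DeltaT 1 = _
    rw [map_one]
    show _ = TSym ((DT.leaf a : DT S), b) ⊗ₜ[ℚ]
      ((([] : List (DT S × S)).map TSym).prod : TAlg S) + 0
    rw [add_zero]
    show (1 : TAlg S ⊗[ℚ] TAlg S) = (1 : TAlg S) ⊗ₜ[ℚ] (1 : TAlg S)
    rw [Algebra.TensorProduct.one_def]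
  | node l r =>
    show DeltaT (X ⟨(DT.node l r, b), ⟨l, r, rfl⟩⟩) = _
    simp only [DeltaT]
    rw [MvPolynomial.aeval_X]

/-- The morphism `x ↦ TSym (Q, b) ⊗ x` as an additive map. -/
noncomputable def tmulHom (b : S) (Q : DT S) : TAlg S →+ TAlg S ⊗[ℚ] TAlg S :=
  ((TensorProduct.mk ℚ (TAlg S) (TAlg S)) (TSym (Q, b))).toAddMonoidHom

theorem tmulHom_apply (b : S) (Q : DT S) (x : TAlg S) :
    tmulHom b Q x = TSym (Q, b) ⊗ₜ[ℚ] x := rfl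

/-- The core combinatorial identity behind the compatibility with the coproducts. -/
theorem core [DecidableEq S] [DecidableEq (DT S)] (a : S) (l : List S) (b : S) :
    ((allTrees (a :: l)).map fun T => ((dcuts T b).map fun q =>
        TSym (q.1, b) ⊗ₜ[ℚ] ((q.2.map TSym).prod : TAlg S)).sum).sum
    = ((marks l).map fun p =>
        hT a p.1 b ⊗ₜ[ℚ] blockProd hT a p.2 p.1 b).sum := by
  classical
  set L1 : List (DT S × TAlg S) := (allTrees (a :: l)).flatMap fun T =>
    (dcuts T b).map fun q => (q.1, ((q.2.map TSym).prod : TAlg S)) with hL1def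
  set L2 : List (DT S × TAlg S) := (marks l).flatMap fun p =>
    (allTrees (a :: p.1)).map fun Q => (Q, blockProd hT a p.2 p.1 b) with hL2def
  set K : List (DT S) := (((allTrees (a :: l)).flatMap fun T => (dcuts T b).map Prod.fst)
    ++ ((marks l).flatMap fun p => allTrees (a :: p.1))).dedup with hKdef
  have hK : K.Nodup := List.nodup_dedup _
  have hL1 : ((allTrees (a :: l)).map fun T => ((dcuts T b).map fun q =>
      TSym (q.1, b) ⊗ₜ[ℚ] ((q.2.map TSym).prod : TAlg S)).sum).sum
      = (L1.map fun p => tmulHom b p.1 p.2).sum := by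
    rw [hL1def, sum_map_flatMap]
    refine congrArg List.sum (List.map_congr_left ?_)
    intro T hT'
    rw [List.map_map]
    rfl
  have hL2 : ((marks l).map fun p => hT a p.1 b ⊗ₜ[ℚ] blockProd hT a p.2 p.1 b).sum
      = (L2.map fun p => tmulHom b p.1 p.2).sum := by
    rw [hL2def, sum_map_flatMap]
    refine congrArg List.sum (List.map_congr_left ?_)
    intro p hp
    rw [List.map_map]
    show hT a p.1 b ⊗ₜ[ℚ] blockProd hT a p.2 p.1 b = _
    have : hT a p.1 b = ((allTrees (a :: p.1)).map fun T => TSym (T, b)).sum := rfl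
    rw [this, list_sum_tmul]
    rfl
  have hmem1 : ∀ p ∈ L1, p.1 ∈ K := by
    intro p hp
    rw [hL1def] at hp
    rcases List.mem_flatMap.mp hp with ⟨T, hT', hp'⟩
    rcases List.mem_map.mp hp' with ⟨q, hq, rfl⟩
    rw [hKdef, List.mem_dedup]
    apply List.mem_append_left
    exact List.mem_flatMap.mpr ⟨T, hT', List.mem_map.mpr ⟨q, hq, rfl⟩⟩
  have hmem2 : ∀ p ∈ L2, p.1 ∈ K := by
    intro p hp
    rw [hL2def] at hp
    rcases List.mem_flatMap.mp hp with ⟨m, hm, hp'⟩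
    rcases List.mem_map.mp hp' with ⟨Q, hQ, rfl⟩
    rw [hKdef, List.mem_dedup]
    apply List.mem_append_right
    exact List.mem_flatMap.mpr ⟨m, hm, hQ⟩
  rw [hL1, hL2, grouping (tmulHom b) L1 K hK hmem1, grouping (tmulHom b) L2 K hK hmem2]
  refine congrArg List.sum (List.map_congr_left ?_)
  intro Q hQ
  apply congrArg
  -- inner sums: both equal the cut/marked sums
  have e1 : (L1.map fun p => if p.1 = Q then p.2 else 0).sum = cutv (a :: l) b Q := by
    rw [hL1def, sum_map_flatMap]
    refine congrArg List.sum (List.map_congr_left ?_)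
    intro T hT'
    rw [List.map_map]
    rfl
  have e2 : (L2.map fun p => if p.1 = Q then p.2 else 0).sum
      = if Q.leftLabel = a then Wm a [] l (leavesD Q).tail b else 0 := by
    rw [hL2def, sum_map_flatMap]
    have hp1 : ∀ p ∈ marks l, (((allTrees (a :: p.1)).map
          fun Q' => ((Q', blockProd hT a p.2 p.1 b) : DT S × TAlg S)).map
            fun p' => if p'.1 = Q then p'.2 else 0).sum
        = if leavesD Q = a :: p.1 then blockProd hT a p.2 p.1 b else 0 := by
      intro p hp
      rw [List.map_map]
      rw [← sum_allTrees_pick Q (a :: p.1) (blockProd hT a p.2 p.1 b)]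
      rfl
    rw [List.map_congr_left hp1]
    by_cases hQ' : Q.leftLabel = a
    · rw [if_pos hQ']
      have hterm : ∀ p ∈ marks l,
          (if leavesD Q = a :: p.1 then blockProd hT a p.2 p.1 b else 0)
          = if p.1 = (leavesD Q).tail then
              blockProd hT a ((([] : List S) ++ p.2.headI) :: p.2.tail) (leavesD Q).tail b
            else 0 := by
        intro p hp
        by_cases h : leavesD Q = a :: p.1
        · have ht : p.1 = (leavesD Q).tail := by simp [h]
          rw [if_pos h, if_pos ht, List.nil_append, marks_snd_ne_nil p hp, ← ht]
        · rw [if_neg h, if_neg]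
          intro hh
          apply h
          rw [leavesD_eq_cons Q, hQ', hh]
      rw [List.map_congr_left hterm]
      rfl
    · rw [if_neg hQ']
      apply List.sum_eq_zero
      intro z hz
      rcases List.mem_map.mp hz with ⟨p, hp, rfl⟩
      rw [if_neg]
      intro hh
      apply hQ'
      have := leavesD_eq_cons Q
      rw [hh] at this
      injection this with h1 _
      exact h1.symm
  rw [e1, e2, cutv_eq_Wm]

end HopfTreeProof
namespace HopfTreeProof

open MvPolynomial

variable {S : Type*}

/-! ### Injectivity via the right-comb retraction -/

def comb (a : S) : List S → DT S
  | [] => DT.leaf a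
  | x :: xs => DT.node (DT.leaf a) (comb x xs)

def combVal : DT S → Option (S × List S)
  | DT.leaf a => some (a, [])
  | DT.node (DT.leaf a) r => (combVal r).map fun p => (a, p.1 :: p.2)
  | DT.node (DT.node _ _) _ => none

theorem combVal_comb : ∀ (l : List S) (a : S), combVal (comb a l) = some (a, l) := by
  intro l
  induction l with
  | nil => intro a; rfl
  | cons x xs ih =>
    intro a
    show (combVal (comb x xs)).map (fun p => (a, p.1 :: p.2)) = _
    rw [ih x]
    rfl

theorem comb_of_combVal : ∀ (T : DT S) (p : S × List S), combVal T = some p → T = comb p.1 p.2 := by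
  intro T
  induction T with
  | leaf a =>
    intro p hp
    injection hp with hp'
    rw [← hp']
    rfl
  | node l r ihl ihr =>
    intro p hp
    cases l with
    | leaf a =>
      have hp2 : (combVal r).map (fun q => (a, q.1 :: q.2)) = some p := hp
      rcases Option.map_eq_some_iff.mp hp2 with ⟨q, hq, rfl⟩
      rw [ihr q hq]
      rfl
    | node l1 l2 => cases hp

theorem leaves_comb : ∀ (l : List S) (a : S), leavesD (comb a l) = a :: l := by
  intro l
  induction l with
  | nil => intro a; rfl
  | cons x xs ih =>
    intro a
    show leavesD (DT.node (DT.leaf a) (comb x xs)) = _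
    show leavesD (DT.leaf a) ++ leavesD (comb x xs) = _
    rw [ih x]
    rfl

noncomputable def rv (T : DT S) (c : S) : Itilde S :=
  match combVal T with
  | some (a, x :: xs) => X (a, ⟨x :: xs, by simp⟩, c)
  | some (_, []) => 1
  | none => 0

noncomputable def retr : TAlg S →ₐ[ℚ] Itilde S :=
  aeval fun gq : TGen S => rv gq.1.1 gq.1.2

theorem retr_TSym (T : DT S) (c : S) : retr (TSym (T, c)) = rv T c := by
  cases T with
  | leaf a =>
    show retr 1 = _
    rw [map_one]
    rfl
  | node l r =>
    show retr (X ⟨(DT.node l r, c), ⟨l, r, rfl⟩⟩) = _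
    simp only [retr]
    rw [aeval_X]

theorem retr_treeMap : (retr.comp (treeMap (S := S))) = AlgHom.id ℚ (Itilde S) := by
  classical
  apply MvPolynomial.algHom_ext
  intro g
  obtain ⟨a, ⟨lg, hlg⟩, b⟩ := g
  rw [AlgHom.comp_apply, treeMap_X, AlgHom.id_apply]
  rw [map_list_sum retr, List.map_map]
  show (((allTrees (a :: lg)).map fun T => retr (TSym (T, b))).sum : Itilde S)
      = (X (a, ⟨lg, hlg⟩, b) : Itilde S)
  have key : ∀ T ∈ allTrees (a :: lg),
      (retr (TSym (T, b)) : Itilde S)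
        = if T = comb a lg then (X (a, ⟨lg, hlg⟩, b) : Itilde S) else 0 := by
    intro T hT'
    rw [retr_TSym]
    have hlv := mem_allTrees_leaves T _ hT'
    cases hc : combVal T with
    | none =>
      rw [if_neg (by intro h; rw [h, combVal_comb] at hc; cases hc)]
      simp only [rv, hc]
    | some p =>
      obtain ⟨p1, p2⟩ := p
      have hT2 : T = comb p1 p2 := comb_of_combVal T (p1, p2) hc
      have hpl : p1 :: p2 = a :: lg := by
        rw [← leaves_comb p2 p1, ← hT2, hlv]
      injection hpl with e1 e2
      subst e1; subst e2
      rw [if_pos hT2]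
      cases p2 with
      | nil => exact absurd rfl hlg
      | cons x xs => simp only [rv, hc]
  rw [List.map_congr_left key, sum_allTrees_pick (comb a lg) _ (X (a, ⟨lg, hlg⟩, b) : Itilde S),
    leaves_comb, if_pos rfl]

theorem treeMap_injective : Function.Injective (treeMap (S := S)) := by
  intro x y hxy
  have h1 : ∀ z : Itilde S, retr (treeMap z) = z := by
    intro z
    have := AlgHom.congr_fun (retr_treeMap (S := S)) z
    simpa using this
  rw [← h1 x, ← h1 y, hxy]

/-! ### Grading -/

theorem internal_leaves (T : DT S) : T.internal + 1 = (leavesD T).length := by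
  induction T with
  | leaf a => rfl
  | node l r ihl ihr =>
    show l.internal + r.internal + 1 + 1 = (leavesD l ++ leavesD r).length
    rw [List.length_append, ← ihl, ← ihr]
    omega

theorem isWH_TSym {T : DT S} {L : List S} (hT : T ∈ allTrees L) (b : S) :
    MvPolynomial.IsWeightedHomogeneous wT (TSym (T, b)) (L.length - 1) := by
  have hlv := mem_allTrees_leaves T _ hT
  cases T with
  | leaf c =>
    have : L.length - 1 = 0 := by rw [← hlv]; rfl
    rw [this]
    exact isWeightedHomogeneous_one ℚ wT
  | node lq rq =>
    have hX := isWeightedHomogeneous_X ℚ wT (⟨(DT.node lq rq, b), ⟨lq, rq, rfl⟩⟩ : TGen S)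
    have hw : wT (⟨(DT.node lq rq, b), ⟨lq, rq, rfl⟩⟩ : TGen S) = L.length - 1 := by
      show (DT.node lq rq).internal = L.length - 1
      rw [← hlv, ← internal_leaves]
      omega
    rw [hw] at hX
    exact hX

theorem isWH_treeMap_X (g : IGen S) :
    MvPolynomial.IsWeightedHomogeneous wT (treeMap (X g) : TAlg S) (wdeg g) := by
  rw [treeMap_X, ← mem_weightedHomogeneousSubmodule]
  apply list_sum_mem
  intro x hx
  rcases List.mem_map.mp hx with ⟨T, hT', rfl⟩
  rw [mem_weightedHomogeneousSubmodule]
  have h := isWH_TSym hT' g.2.2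
  have : (g.1 :: g.2.1.1).length - 1 = wdeg g := by simp [wdeg]
  rwa [this] at h

theorem isWH_pow {σ : Type*} {w : σ → ℕ} {φ : MvPolynomial σ ℚ} {m : ℕ}
    (h : MvPolynomial.IsWeightedHomogeneous w φ m) (k : ℕ) :
    MvPolynomial.IsWeightedHomogeneous w (φ ^ k) (k * m) := by
  induction k with
  | zero => rw [pow_zero, zero_mul]; exact isWeightedHomogeneous_one ℚ w
  | succ n ih =>
    rw [pow_succ, add_mul, one_mul]
    exact ih.mul h

theorem isWH_treeMap_monomial (d : IGen S →₀ ℕ) (c : ℚ) :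
    MvPolynomial.IsWeightedHomogeneous wT (treeMap ((monomial d) c) : TAlg S)
      (Finsupp.weight wdeg d) := by
  classical
  induction d using Finsupp.induction with
  | zero =>
    rw [show ((monomial (0 : IGen S →₀ ℕ)) c : Itilde S) = C c from by
      rw [MvPolynomial.C_apply]]
    have : treeMap (C c : Itilde S) = (C c : TAlg S) := by
      rw [show (C c : Itilde S) = algebraMap ℚ (Itilde S) c from rfl]
      rw [AlgHom.commutes]
      rfl
    rw [this, map_zero]
    exact isWeightedHomogeneous_C wT c
  | single_add g n f hgf hn ih =>
    rw [show ((monomial (Finsupp.single g n + f)) c : Itilde S)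
        = X g ^ n * (monomial f) c from by
      rw [MvPolynomial.monomial_single_add]]
    rw [map_mul, map_pow, map_add, Finsupp.weight_apply, Finsupp.sum_single_index (by simp),
      smul_eq_mul]
    exact (isWH_pow (isWH_treeMap_X g) n).mul ih

theorem treeMap_graded (n : ℕ) (x : Itilde S)
    (hx : x ∈ MvPolynomial.weightedHomogeneousSubmodule ℚ wdeg n) :
    treeMap x ∈ MvPolynomial.weightedHomogeneousSubmodule ℚ wT n := by
  rw [mem_weightedHomogeneousSubmodule] at hx
  rw [← MvPolynomial.support_sum_monomial_coeff x, map_sum]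
  apply Submodule.sum_mem
  intro d hd
  rw [mem_weightedHomogeneousSubmodule]
  have hw : Finsupp.weight wdeg d = n := hx (MvPolynomial.mem_support_iff.mp hd)
  rw [← hw]
  exact isWH_treeMap_monomial d _

end HopfTreeProof
namespace HopfTreeProof

open MvPolynomial

variable {S : Type*}

theorem treeMap_coproduct :
    (DeltaT.comp (treeMap (S := S)))
      = (Algebra.TensorProduct.map (treeMap (S := S)) (treeMap (S := S))).comp Delta := by
  classical
  apply MvPolynomial.algHom_ext
  intro g
  obtain ⟨a, ⟨lg, hlg⟩, b⟩ := g
  rw [AlgHom.comp_apply, AlgHom.comp_apply, treeMap_X]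
  rw [map_list_sum DeltaT, List.map_map]
  show (((allTrees (a :: lg)).map fun T => DeltaT (TSym (T, b))).sum : TAlg S ⊗[ℚ] TAlg S) = _
  rw [List.map_congr_left fun T (_ : T ∈ allTrees (a :: lg)) => deltaT_TSym T b]
  have hD : Delta (X (a, (⟨lg, hlg⟩ : {l : List S // l ≠ []}), b) : Itilde S)
      = ((marks lg).map fun p =>
          ISym a p.1 b ⊗ₜ[ℚ] blockProd ISym a p.2 p.1 b).sum := by
    simp only [Delta]
    rw [MvPolynomial.aeval_X]
  rw [hD, map_list_sum (Algebra.TensorProduct.map treeMap treeMap), List.map_map]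
  rw [show ((marks lg).map ((Algebra.TensorProduct.map (treeMap (S := S)) treeMap) ∘ fun p =>
      ISym a p.1 b ⊗ₜ[ℚ] blockProd ISym a p.2 p.1 b))
      = (marks lg).map fun p => hT a p.1 b ⊗ₜ[ℚ] blockProd hT a p.2 p.1 b from
    List.map_congr_left fun p _ => by
      show (Algebra.TensorProduct.map treeMap treeMap)
          (ISym a p.1 b ⊗ₜ[ℚ] blockProd ISym a p.2 p.1 b) = _
      rw [Algebra.TensorProduct.map_tmul, treeMap_ISym, treeMap_blockProd]]
  exact core a lg b

end HopfTreeProof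

theorem treeMap_injective_graded_Hopf_hom (S : Type*) :
    -- t is injective
    Function.Injective (treeMap (S := S)) ∧
    -- t preserves the grading
    (∀ (n : ℕ) (x : Itilde S), x ∈ MvPolynomial.weightedHomogeneousSubmodule ℚ wdeg n →
      treeMap x ∈ MvPolynomial.weightedHomogeneousSubmodule ℚ wT n) ∧
    -- t intertwines the coproducts: Δ_𝒯 ∘ t = (t ⊗ t) ∘ Δ
    (∀ x : Itilde S,
      DeltaT (treeMap x) =
        (Algebra.TensorProduct.map (treeMap (S := S)) (treeMap (S := S))) (Delta x)) := by
  refine ⟨HopfTreeProof.treeMap_injective, HopfTreeProof.treeMap_graded, ?_⟩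
  intro x
  have := AlgHom.congr_fun (HopfTreeProof.treeMap_coproduct (S := S)) x
  simpa using this
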